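/- The max-Rains relative entropy R_max is monotone under PPT-preserving channels: if ρ ≤ 2^λ σ' for a positive operator σ' with ‖T_B(σ')‖₁ ≤ 1, and P is a completely positive trace-preserving map such that T_B ∘ P ∘ T_B is also completely positive, then P(ρ) ≤ 2^λ τ' for some positive operator τ' with ‖T_B(τ')‖₁ ≤ 1. -/

import Mathlib

open Matrix
open scoped ComplexOrder BigOperators Classical

noncomputable section

/-- Trace norm of a complex square matrix: `‖A‖₁ = Tr √(AᴴA)`. -/
def traceNorm {n : Type*} [Fintype n] [DecidableEq n] (A : Matrix n n ℂ) : ℝ :=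
  (((Matrix.posSemidef_conjTranspose_mul_self A).1.eigenvectorUnitary : Matrix n n ℂ) *
    Matrix.diagonal (((↑) : ℝ → ℂ) ∘ Real.sqrt ∘ (Matrix.posSemidef_conjTranspose_mul_self A).1.eigenvalues) *
    (star (Matrix.posSemidef_conjTranspose_mul_self A).1.eigenvectorUnitary : Matrix n n ℂ)).trace.re

/-- Partial transpose on the second tensor factor. -/
def ptB {α β : Type*} (A : Matrix (α × β) (α × β) ℂ) : Matrix (α × β) (α × β) ℂ :=
  fun x y => A (x.1, y.2) (y.1, x.2)

/-- The Choi matrix of a map between matrix spaces. -/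
def choiMatrix {ι κ : Type*} [Fintype ι] [DecidableEq ι] [Fintype κ]
    (F : Matrix ι ι ℂ → Matrix κ κ ℂ) : Matrix (ι × κ) (ι × κ) ℂ :=
  fun x y => F (Matrix.single x.1 y.1 1) x.2 y.2

/-- A map is completely positive iff its Choi matrix is positive semidefinite. -/
def IsCompletelyPositive {ι κ : Type*} [Fintype ι] [DecidableEq ι] [Fintype κ]
    (F : Matrix ι ι ℂ → Matrix κ κ ℂ) : Prop :=
  (choiMatrix F).PosSemidef

namespace RmaxAux

variable {n : Type*} [Fintype n] [DecidableEq n]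

lemma trace_conj {U : Matrix n n ℂ} (hU : U ∈ Matrix.unitaryGroup n ℂ)
    (A : Matrix n n ℂ) : (U * A * star U).trace = A.trace := by
  rw [trace_mul_comm, ← Matrix.mul_assoc, Matrix.mem_unitaryGroup_iff'.mp hU, Matrix.one_mul]

lemma trace_conj' {U : Matrix n n ℂ} (hU : U ∈ Matrix.unitaryGroup n ℂ)
    (A : Matrix n n ℂ) : (star U * A * U).trace = A.trace := by
  rw [trace_mul_comm, ← Matrix.mul_assoc, Matrix.mem_unitaryGroup_iff.mp hU, Matrix.one_mul]

lemma conj_mul_conj {U : Matrix n n ℂ} (hU : U ∈ Matrix.unitaryGroup n ℂ)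
    (f g : n → ℂ) :
    (U * diagonal f * star U) * (U * diagonal g * star U)
      = U * diagonal (fun i => f i * g i) * star U := by
  have h1 : star U * U = 1 := Matrix.mem_unitaryGroup_iff'.mp hU
  calc (U * diagonal f * star U) * (U * diagonal g * star U)
      = U * diagonal f * (star U * U) * (diagonal g * star U) := by
        simp only [Matrix.mul_assoc]
    _ = U * (diagonal f * diagonal g) * star U := by
        rw [h1, Matrix.mul_one]; simp only [Matrix.mul_assoc]
    _ = U * diagonal (fun i => f i * g i) * star U := by
        rw [diagonal_mul_diagonal]

lemma psd_conj (U : Matrix n n ℂ) (f : n → ℝ) (hf : ∀ i, 0 ≤ f i) :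
    (U * diagonal (fun i => (f i : ℂ)) * star U).PosSemidef := by
  have hd : PosSemidef (diagonal (fun i => (f i : ℂ))) :=
    posSemidef_diagonal_iff.mpr fun i => by
      simpa using Complex.zero_le_real.mpr (hf i)
  simpa [Matrix.star_eq_conjTranspose, Matrix.mul_assoc] using
    hd.mul_mul_conjTranspose_same U

lemma traceNorm_isHermitian {X : Matrix n n ℂ} (hX : X.IsHermitian) :
    traceNorm X = ∑ i, |hX.eigenvalues i| := by
  set U : Matrix n n ℂ := (hX.eigenvectorUnitary : Matrix n n ℂ) with hUdef
  have hU : U ∈ Matrix.unitaryGroup n ℂ := hX.eigenvectorUnitary.2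
  set d := hX.eigenvalues with hddef
  set S : Matrix n n ℂ := U * diagonal (fun i => ((|d i| : ℝ) : ℂ)) * star U with hSdef
  have hSpsd : S.PosSemidef := psd_conj U _ (fun i => abs_nonneg _)
  have hXspec : X = U * diagonal (fun i => (d i : ℂ)) * star U := by
    simpa [Function.comp_def] using hX.spectral_theorem
  have hsq : S ^ 2 = Xᴴ * X := by
    rw [hX.eq, pow_two, hSdef, conj_mul_conj hU]
    conv_rhs => rw [hXspec]
    rw [conj_mul_conj hU]
    have he : (fun i => ((|d i| : ℝ) : ℂ) * ((|d i| : ℝ) : ℂ))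
        = fun i => ((d i : ℝ) : ℂ) * ((d i : ℝ) : ℂ) := by
      funext i; exact_mod_cast abs_mul_abs_self (d i)
    rw [he]
  have hXX : Xᴴ * X = cfc (fun x : ℝ => x ^ 2) X := by
    rw [cfc_pow_id X 2 hX.isSelfAdjoint, hX.eq, pow_two]
  have h1 : traceNorm X = (cfc Real.sqrt (Xᴴ * X)).trace.re := by
    rw [traceNorm, (posSemidef_conjTranspose_mul_self X).1.cfc_eq, IsHermitian.cfc,
      Unitary.conjStarAlgAut_apply]
    rfl
  have h2 : cfc Real.sqrt (Xᴴ * X) = S := by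
    rw [hXX, ← cfc_comp Real.sqrt (fun x : ℝ => x ^ 2) X hX.isSelfAdjoint]
    rw [cfc_congr (g := fun x : ℝ => |x|) (fun x _ => by simp [Real.sqrt_sq_eq_abs]),
      hX.cfc_eq, IsHermitian.cfc, Unitary.conjStarAlgAut_apply, hSdef]
    rfl
  rw [h1, h2, hSdef, trace_conj hU, trace_diagonal, Complex.re_sum]
  norm_num

lemma traceNorm_posSemidef {A : Matrix n n ℂ} (hA : A.PosSemidef) :
    traceNorm A = A.trace.re := by
  rw [traceNorm_isHermitian hA.1]
  have htr : A.trace = ∑ i, ((hA.1.eigenvalues i : ℂ)) := by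
    conv_lhs => rw [hA.1.spectral_theorem]
    rw [Unitary.conjStarAlgAut_apply, trace_conj hA.1.eigenvectorUnitary.2, trace_diagonal]
    rfl
  rw [htr, Complex.re_sum]
  exact Finset.sum_congr rfl fun i _ => by
    rw [abs_of_nonneg (hA.eigenvalues_nonneg i)]; norm_num


lemma traceNorm_sub_le {P Q : Matrix n n ℂ} (hP : P.PosSemidef) (hQ : Q.PosSemidef) :
    traceNorm (P - Q) ≤ P.trace.re + Q.trace.re := by
  have hX : (P - Q).IsHermitian := hP.1.sub hQ.1
  set U : Matrix n n ℂ := (hX.eigenvectorUnitary : Matrix n n ℂ) with hUdef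
  have hU : U ∈ Matrix.unitaryGroup n ℂ := hX.eigenvectorUnitary.2
  set d := hX.eigenvalues with hddef
  have hPc : (star U * P * U).PosSemidef := by
    simpa [Matrix.star_eq_conjTranspose] using hP.conjTranspose_mul_mul_same U
  have hQc : (star U * Q * U).PosSemidef := by
    simpa [Matrix.star_eq_conjTranspose] using hQ.conjTranspose_mul_mul_same U
  have hdiag : star U * (P - Q) * U = diagonal (RCLike.ofReal ∘ d) :=
    by simpa using hX.conjStarAlgAut_star_eigenvectorUnitary
  have hsplit : ∀ i, ((d i : ℝ) : ℂ) = (star U * P * U) i i - (star U * Q * U) i i := by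
    intro i
    have h1 : star U * (P - Q) * U = star U * P * U - star U * Q * U := by
      rw [Matrix.mul_sub, Matrix.sub_mul]
    have h2 := congrFun (congrFun (h1.symm.trans hdiag) i) i
    simp only [Matrix.sub_apply, diagonal_apply_eq, Function.comp] at h2
    exact h2.symm
  have hPd : ∀ i, 0 ≤ (star U * P * U) i i := by
    intro i
    exact hPc.diag_nonneg
  have hQd : ∀ i, 0 ≤ (star U * Q * U) i i := by
    intro i
    exact hQc.diag_nonneg
  have habs : ∀ i, |d i| ≤ ((star U * P * U) i i).re + ((star U * Q * U) i i).re := by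
    intro i
    have hp := (Complex.le_def.mp (hPd i)).1
    have hq := (Complex.le_def.mp (hQd i)).1
    have hd : d i = ((star U * P * U) i i).re - ((star U * Q * U) i i).re := by
      have := congrArg Complex.re (hsplit i)
      simpa using this
    rw [hd]
    simp only [Complex.zero_re] at hp hq
    refine abs_le.mpr ⟨by linarith, by linarith⟩
  calc traceNorm (P - Q) = ∑ i, |d i| := traceNorm_isHermitian hX
    _ ≤ ∑ i, (((star U * P * U) i i).re + ((star U * Q * U) i i).re) :=
        Finset.sum_le_sum fun i _ => habs i
    _ = (star U * P * U).trace.re + (star U * Q * U).trace.re := by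
        rw [Finset.sum_add_distrib, Matrix.trace, Matrix.trace, Complex.re_sum, Complex.re_sum]
        rfl
    _ = P.trace.re + Q.trace.re := by rw [trace_conj' hU, trace_conj' hU]


open scoped MatrixOrder in
lemma cp_posSemidef {ι κ : Type*} [Fintype ι] [DecidableEq ι] [Fintype κ] [DecidableEq κ]
    {P : Matrix ι ι ℂ → Matrix κ κ ℂ}
    (hadd : ∀ X Y, P (X + Y) = P X + P Y)
    (hsmul : ∀ (c : ℂ) X, P (c • X) = c • P X)
    (hCP : IsCompletelyPositive P)
    {X : Matrix ι ι ℂ} (hX : X.PosSemidef) : (P X).PosSemidef := by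
  obtain ⟨V, hV⟩ := CStarAlgebra.nonneg_iff_eq_star_mul_self.mp hCP.nonneg
  let L : Matrix ι ι ℂ →ₗ[ℂ] Matrix κ κ ℂ :=
    { toFun := P, map_add' := hadd, map_smul' := hsmul }
  have hPsum : ∀ (Y : Matrix ι ι ℂ) (a b : κ),
      P Y a b = ∑ i, ∑ j, Y i j * P (Matrix.single i j 1) a b := by
    intro Y a b
    have h0 : P Y = ∑ i, ∑ j, Y i j • P (Matrix.single i j 1) := by
      conv_lhs => rw [show P Y = L Y from rfl, matrix_eq_sum_single Y]
      rw [map_sum]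
      refine Finset.sum_congr rfl fun i _ => ?_
      rw [map_sum]
      refine Finset.sum_congr rfl fun j _ => ?_
      rw [show Matrix.single i j (Y i j) = Y i j • Matrix.single i j 1 by
        rw [Matrix.smul_single, smul_eq_mul, mul_one]]
      exact L.map_smul (Y i j) _
    rw [h0]
    simp [Matrix.sum_apply]
  let K : (ι × κ) → Matrix κ ι ℂ := fun m => fun a i => star (V m (i, a))
  have key : P X = ∑ m, K m * X * (K m)ᴴ := by
    ext a b
    rw [hPsum X a b]
    have hC : ∀ i j, P (Matrix.single i j 1) a b
        = ∑ m, star (V m (i, a)) * V m (j, b) := by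
      intro i j
      have := congrFun (congrFun hV (i, a)) (j, b)
      simpa [choiMatrix, Matrix.mul_apply, conjTranspose_apply] using this
    calc ∑ i, ∑ j, X i j * P (Matrix.single i j 1) a b
        = ∑ i, ∑ j, ∑ m, star (V m (i,a)) * X i j * V m (j,b) := by
          refine Finset.sum_congr rfl fun i _ => Finset.sum_congr rfl fun j _ => ?_
          rw [hC i j, Finset.mul_sum]
          exact Finset.sum_congr rfl fun m _ => by ring
      _ = ∑ j, ∑ i, ∑ m, star (V m (i,a)) * X i j * V m (j,b) := Finset.sum_comm
      _ = ∑ j, ∑ m, ∑ i, star (V m (i,a)) * X i j * V m (j,b) :=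
          Finset.sum_congr rfl fun j _ => Finset.sum_comm
      _ = ∑ m, ∑ j, ∑ i, star (V m (i,a)) * X i j * V m (j,b) := Finset.sum_comm
      _ = (∑ m, K m * X * (K m)ᴴ) a b := by
          simp only [Matrix.sum_apply, Matrix.mul_apply, conjTranspose_apply,
            Finset.sum_mul]
          refine Finset.sum_congr rfl fun m _ => Finset.sum_congr rfl fun j _ =>
            Finset.sum_congr rfl fun i _ => ?_
          simp only [K, star_star]
  rw [key]
  exact Finset.sum_induction _ _ (fun A B hA hB => hA.add hB) Matrix.PosSemidef.zero
    (fun m _ => hX.mul_mul_conjTranspose_same (K m))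

section ptB
variable {α β : Type*}

lemma ptB_ptB (A : Matrix (α × β) (α × β) ℂ) : ptB (ptB A) = A := rfl

lemma ptB_add (A B : Matrix (α × β) (α × β) ℂ) : ptB (A + B) = ptB A + ptB B := rfl

lemma ptB_sub (A B : Matrix (α × β) (α × β) ℂ) : ptB (A - B) = ptB A - ptB B := rfl

lemma trace_ptB [Fintype α] [Fintype β] (A : Matrix (α × β) (α × β) ℂ) :
    (ptB A).trace = A.trace := rfl

lemma ptB_isHermitian {A : Matrix (α × β) (α × β) ℂ} (hA : A.IsHermitian) :
    (ptB A).IsHermitian := by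
  have : (ptB A)ᴴ = ptB A := by
    funext x y
    have h := congrFun (congrFun hA (x.1, y.2)) (y.1, x.2)
    simpa [conjTranspose_apply, ptB] using h
  exact this

end ptB


end RmaxAux

/-- Monotonicity of the max-Rains relative entropy under PPT-preserving channels:
if `ρ ≤ 2^λ σ'` with `σ' ≥ 0` and `‖T_B(σ')‖₁ ≤ 1`, and `P` is a channel such
that `T_B ∘ P ∘ T_B` is completely positive, then `P(ρ) ≤ 2^λ τ'` for some
`τ' ≥ 0` with `‖T_B(τ')‖₁ ≤ 1`. -/

theorem rmax_monotone_ppt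
    {α β α' β' : Type*} [Fintype α] [Fintype β] [DecidableEq α] [DecidableEq β]
    [Fintype α'] [Fintype β'] [DecidableEq α'] [DecidableEq β']
    (P : Matrix (α × β) (α × β) ℂ → Matrix (α' × β') (α' × β') ℂ)
    (hadd : ∀ X Y, P (X + Y) = P X + P Y)
    (hsmul : ∀ (c : ℂ) X, P (c • X) = c • P X)
    (hCP : IsCompletelyPositive P)
    (hTP : ∀ X, (P X).trace = X.trace)
    (hPPT : IsCompletelyPositive (fun X => ptB (P (ptB X))))
    (ρ : Matrix (α × β) (α × β) ℂ) (hρ : ρ.PosSemidef) (hρt : ρ.trace = 1)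
    (σ' : Matrix (α × β) (α × β) ℂ) (hσ' : σ'.PosSemidef)
    (hσtn : traceNorm (ptB σ') ≤ 1)
    (l : ℝ) (hle : (((2 : ℝ) ^ l) • σ' - ρ).PosSemidef) :
    ∃ τ' : Matrix (α' × β') (α' × β') ℂ, τ'.PosSemidef ∧
      traceNorm (ptB τ') ≤ 1 ∧ (((2 : ℝ) ^ l) • τ' - P ρ).PosSemidef := by
  classical
  have hsub : ∀ X Y, P (X - Y) = P X - P Y := by
    intro X Y
    have h := hadd (X - Y) Y
    rw [sub_add_cancel] at h
    exact eq_sub_of_add_eq h.symm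
  refine ⟨P σ', RmaxAux.cp_posSemidef hadd hsmul hCP hσ', ?_, ?_⟩
  · -- trace norm bound
    set X := ptB σ' with hXdef
    have hXh : X.IsHermitian := RmaxAux.ptB_isHermitian hσ'.1
    set U : Matrix ((α × β)) ((α × β)) ℂ := (hXh.eigenvectorUnitary : Matrix (α × β) (α × β) ℂ) with hU0
    have hU : U ∈ Matrix.unitaryGroup _ ℂ := hXh.eigenvectorUnitary.2
    set d := hXh.eigenvalues with hd0
    set Xp := U * diagonal (fun i => ((max (d i) 0 : ℝ) : ℂ)) * star U with hXp0
    set Xm := U * diagonal (fun i => ((max (-d i) 0 : ℝ) : ℂ)) * star U with hXm0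
    have hXp : Xp.PosSemidef := RmaxAux.psd_conj U _ (fun i => le_max_right _ _)
    have hXm : Xm.PosSemidef := RmaxAux.psd_conj U _ (fun i => le_max_right _ _)
    have hXpm : Xp - Xm = X := by
      rw [hXp0, hXm0, ← Matrix.sub_mul, ← Matrix.mul_sub, diagonal_sub]
      have he : (fun i => ((max (d i) 0 : ℝ) : ℂ) - ((max (-d i) 0 : ℝ) : ℂ))
          = fun i => ((d i : ℝ) : ℂ) := by
        funext i
        rw [← Complex.ofReal_sub, max_zero_sub_max_neg_zero_eq_self]
      rw [he]
      have hs : X = U * diagonal (fun i => ((d i : ℝ) : ℂ)) * star U := by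
        simpa [Function.comp_def] using hXh.spectral_theorem
      exact hs.symm
    have htrace : Xp.trace.re + Xm.trace.re = traceNorm X := by
      rw [RmaxAux.traceNorm_isHermitian hXh, hXp0, hXm0, RmaxAux.trace_conj hU,
        RmaxAux.trace_conj hU, trace_diagonal, trace_diagonal, Complex.re_sum,
        Complex.re_sum, ← Finset.sum_add_distrib]
      refine Finset.sum_congr rfl fun i _ => ?_
      simp only [Complex.ofReal_re]
      rcases le_total 0 (d i) with h | h
      · rw [max_eq_left h, max_eq_right (neg_nonpos.mpr h), add_zero, abs_of_nonneg h]
      · rw [max_eq_right h, max_eq_left (neg_nonneg.mpr h), zero_add, abs_of_nonpos h]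
    set N : Matrix ((α × β)) ((α × β)) ℂ → Matrix ((α' × β')) ((α' × β')) ℂ :=
      fun Y => ptB (P (ptB Y)) with hN0
    have hNadd : ∀ A B, N (A + B) = N A + N B := by
      intro A B
      simp only [hN0, RmaxAux.ptB_add, hadd]
    have hNsmul : ∀ (c : ℂ) A, N (c • A) = c • N A := by
      intro c A
      simp only [hN0]
      rw [show ptB (c • A) = c • ptB A from rfl, hsmul]
      rfl
    have hNp : (N Xp).PosSemidef := RmaxAux.cp_posSemidef hNadd hNsmul hPPT hXp
    have hNm : (N Xm).PosSemidef := RmaxAux.cp_posSemidef hNadd hNsmul hPPT hXm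
    have hNsub : N Xp - N Xm = ptB (P σ') := by
      have h1 : N (Xp - Xm) = N Xp - N Xm := by
        have h := hNadd (Xp - Xm) Xm
        rw [sub_add_cancel] at h
        exact eq_sub_of_add_eq h.symm
      rw [← h1, hXpm, hN0]
      simp only [hXdef, RmaxAux.ptB_ptB]
    have hNtr : ∀ Y : Matrix ((α × β)) ((α × β)) ℂ, (N Y).trace = Y.trace := by
      intro Y
      rw [hN0]
      calc (ptB (P (ptB Y))).trace = (P (ptB Y)).trace := RmaxAux.trace_ptB _
        _ = (ptB Y).trace := hTP _
        _ = Y.trace := RmaxAux.trace_ptB _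
    calc traceNorm (ptB (P σ')) = traceNorm (N Xp - N Xm) := by rw [hNsub]
      _ ≤ (N Xp).trace.re + (N Xm).trace.re := RmaxAux.traceNorm_sub_le hNp hNm
      _ = Xp.trace.re + Xm.trace.re := by rw [hNtr, hNtr]
      _ = traceNorm X := htrace
      _ ≤ 1 := hσtn
  · -- positivity of 2^l • P σ' - P ρ
    have hr : ∀ (r : ℝ) (M : Matrix ((α × β)) ((α × β)) ℂ), r • M = ((r : ℂ)) • M := by
      intro r M
      ext i j
      simp [Complex.real_smul]
    have hr' : ∀ (r : ℝ) (M : Matrix ((α' × β')) ((α' × β')) ℂ), r • M = ((r : ℂ)) • M := by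
      intro r M
      ext i j
      simp [Complex.real_smul]
    have h1 : ((2:ℝ)^l) • P σ' - P ρ = P (((2:ℝ)^l) • σ' - ρ) := by
      rw [hsub]
      congr 1
      rw [hr', hr, hsmul]
    rw [h1]
    exact RmaxAux.cp_posSemidef hadd hsmul hCP hle

end
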